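/- Let Λ and X be complete metric spaces and let S_λ(·,·), λ ∈ Λ, be a family of processes on X, each possessing a uniform attractor 𝔸_λ. Suppose there exists a compact set K ⊆ X such that: (a) for every bounded B ⊆ X and each λ ∈ Λ there exists t_{B,λ} such that S_λ(t+s,s)B ⊆ K for all t ≥ t_{B,λ} and all s ∈ ℝ; and (b) for each t > 0 the map λ ↦ S_λ(t+s,s)x is continuous, uniformly for s ∈ ℝ and x ∈ K. Then the map λ ↦ 𝔸_λ, into the nonempty compact subsets of X with the Hausdorff metric, is continuous at every point of a residual subset of Λ. -/

import Mathlib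

open Filter Topology Metric Bornology

/-- A process on a metric space `X`: a two-parameter family `S t s : X → X` (`t ≥ s`)
with `S t t = id`, `S t τ ∘ S τ s = S t s` for `t ≥ τ ≥ s`, and `(t, s, x) ↦ S t s x`
continuous on the region `s ≤ t`. -/
def IsProcess {X : Type*} [MetricSpace X] (S : ℝ → ℝ → X → X) : Prop :=
  (∀ t : ℝ, S t t = id) ∧
  (∀ t τ s : ℝ, s ≤ τ → τ ≤ t → S t τ ∘ S τ s = S t s) ∧
  ContinuousOn (fun p : ℝ × ℝ × X => S p.1 p.2.1 p.2.2) {p : ℝ × ℝ × X | p.2.1 ≤ p.1}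

/-- `A` uniformly attracts every bounded set under the process `S`:
`lim_{t→∞} sup_{s∈ℝ} ρ_X(S(t+s,s)B, A) = 0` for every bounded `B`. -/
def UniformlyAttracts {X : Type*} [MetricSpace X] (S : ℝ → ℝ → X → X) (A : Set X) :
    Prop :=
  ∀ B : Set X, IsBounded B → ∀ ε : ℝ, 0 < ε → ∃ T : ℝ, ∀ t ≥ T, ∀ s : ℝ, ∀ x ∈ B,
    EMetric.infEdist (S (t + s) s x) A < ENNReal.ofReal ε

/-- A uniform attractor for the process `S`: the minimal compact set that uniformly
attracts every bounded set. -/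
def IsUniformAttractor {X : Type*} [MetricSpace X] (S : ℝ → ℝ → X → X) (A : Set X) :
    Prop :=
  IsCompact A ∧ UniformlyAttracts S A ∧
  ∀ C : Set X, IsCompact C → UniformlyAttracts S C → A ⊆ C

/-- An absorbing set uniformly attracts. -/
lemma attracts_of_absorbs {X : Type*} [MetricSpace X] {S : ℝ → ℝ → X → X}
    {K : Set X} (habs : ∀ B : Set X, IsBounded B → ∃ tB : ℝ, ∀ t ≥ tB, ∀ s : ℝ,
      ∀ x ∈ B, S (t + s) s x ∈ K) :
    UniformlyAttracts S K := by
  intro B hB ε hε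
  obtain ⟨T, hT⟩ := habs B hB
  refine ⟨T, fun t ht s x hx => ?_⟩
  refine lt_of_eq_of_lt (Metric.infEDist_zero_of_mem (hT t ht s x hx)) ?_
  exact ENNReal.ofReal_pos.2 hε

/-- Upper semicontinuity of the attractor map: near `l₀`, the attractor `A l` is contained
in any given `ε`-neighborhood of `A l₀`. -/
lemma attractor_usc {Λ X : Type*} [MetricSpace Λ] [MetricSpace X]
    (S : Λ → ℝ → ℝ → X → X) (hproc : ∀ l : Λ, IsProcess (S l))
    (A : Λ → Set X) (hA : ∀ l : Λ, IsUniformAttractor (S l) (A l))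
    (K : Set X) (hK : IsCompact K)
    (habs : ∀ (B : Set X), IsBounded B → ∀ l : Λ, ∃ tB : ℝ, ∀ t ≥ tB, ∀ s : ℝ,
      ∀ x ∈ B, S l (t + s) s x ∈ K)
    (hunif : ∀ t : ℝ, 0 < t → ∀ l₀ : Λ, ∀ ε : ℝ, 0 < ε → ∃ δ : ℝ, 0 < δ ∧
      ∀ l : Λ, dist l l₀ < δ → ∀ s : ℝ, ∀ x ∈ K,
        dist (S l (t + s) s x) (S l₀ (t + s) s x) < ε)
    (l₀ : Λ) (ε : ℝ) (hε : 0 < ε) :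
    ∃ δ : ℝ, 0 < δ ∧ ∀ l : Λ, dist l l₀ < δ → ∀ a ∈ A l,
      EMetric.infEdist a (A l₀) ≤ ENNReal.ofReal ε := by
  obtain ⟨T, hT⟩ := (hA l₀).2.1 K hK.isBounded (ε / 2) (half_pos hε)
  set t₀ : ℝ := max T 1 with ht₀def
  have ht₀pos : (0 : ℝ) < t₀ := lt_of_lt_of_le one_pos (le_max_right _ _)
  obtain ⟨δ, hδpos, hδ⟩ := hunif t₀ ht₀pos l₀ (ε / 2) (half_pos hε)
  refine ⟨δ, hδpos, fun l hl => ?_⟩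
  set C : Set X := K ∩ {x | EMetric.infEdist x (A l₀) ≤ ENNReal.ofReal ε} with hCdef
  have hCcomp : IsCompact C :=
    hK.inter_right ((isClosed_le EMetric.continuous_infEdist continuous_const))
  have hattr : UniformlyAttracts (S l) C := by
    intro B hB ε' hε'
    obtain ⟨tB, htB⟩ := habs B hB l
    refine ⟨max tB 0 + t₀, fun t ht s x hx => ?_⟩
    set τ : ℝ := t - t₀ with hτdef
    have hτB : tB ≤ τ := le_trans (le_max_left tB 0) (by simp only [hτdef]; linarith)
    have hτ0 : (0 : ℝ) ≤ τ := le_trans (le_max_right tB 0) (by simp only [hτdef]; linarith)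
    have hy : S l (τ + s) s x ∈ K := htB τ hτB s x hx
    have hzK : S l (t + s) s x ∈ K := htB t (by linarith) s x hx
    set y : X := S l (τ + s) s x with hydef
    have h1 : S l (t₀ + (τ + s)) (τ + s) y = S l (t + s) s x := by
      have hc := congrFun ((hproc l).2.1 (t + s) (τ + s) s (by linarith) (by linarith)) x
      simp only [Function.comp_apply] at hc
      rw [show t₀ + (τ + s) = t + s by simp only [hτdef]; ring]
      exact hc
    have h2 : dist (S l (t₀ + (τ + s)) (τ + s) y) (S l₀ (t₀ + (τ + s)) (τ + s) y) < ε / 2 :=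
      hδ l hl (τ + s) y hy
    have h3 : EMetric.infEdist (S l₀ (t₀ + (τ + s)) (τ + s) y) (A l₀)
        < ENNReal.ofReal (ε / 2) := hT t₀ (le_max_left _ _) (τ + s) y hy
    have hzC : S l (t + s) s x ∈ C := by
      refine ⟨hzK, ?_⟩
      have hcalc : EMetric.infEdist (S l (t + s) s x) (A l₀) ≤ ENNReal.ofReal ε := by
        calc EMetric.infEdist (S l (t + s) s x) (A l₀)
            = EMetric.infEdist (S l (t₀ + (τ + s)) (τ + s) y) (A l₀) := by rw [h1]
          _ ≤ edist (S l (t₀ + (τ + s)) (τ + s) y) (S l₀ (t₀ + (τ + s)) (τ + s) y)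
              + EMetric.infEdist (S l₀ (t₀ + (τ + s)) (τ + s) y) (A l₀) :=
              EMetric.infEdist_le_edist_add_infEdist
          _ ≤ ENNReal.ofReal (ε / 2) + ENNReal.ofReal (ε / 2) := by
              refine add_le_add ?_ h3.le
              rw [edist_dist]
              exact ENNReal.ofReal_le_ofReal h2.le
          _ = ENNReal.ofReal ε := by
              rw [← ENNReal.ofReal_add (by linarith) (by linarith)]
              norm_num
      exact hcalc
    refine lt_of_eq_of_lt (Metric.infEDist_zero_of_mem hzC) ?_
    exact ENNReal.ofReal_pos.2 hε'
  have hsub : A l ⊆ C := (hA l).2.2 C hCcomp hattr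
  exact fun a ha => (hsub ha).2

/-- Residual continuity of uniform attractors: if there is a compact uniformly
absorbing set `K` and the processes depend on `λ` continuously, uniformly in `s ∈ ℝ`
and `x ∈ K`, then `λ ↦ 𝔸_λ` is continuous at every point of a residual subset. -/
theorem stmt10 {Λ X : Type*} [MetricSpace Λ] [CompleteSpace Λ]
    [MetricSpace X] [CompleteSpace X]
    (S : Λ → ℝ → ℝ → X → X) (hproc : ∀ l : Λ, IsProcess (S l))
    (A : Λ → Set X) (hA : ∀ l : Λ, IsUniformAttractor (S l) (A l))
    (K : Set X) (hK : IsCompact K)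
    -- (a): `K` uniformly absorbs every bounded set
    (habs : ∀ (B : Set X), IsBounded B → ∀ l : Λ, ∃ tB : ℝ, ∀ t ≥ tB, ∀ s : ℝ,
      ∀ x ∈ B, S l (t + s) s x ∈ K)
    -- (b): continuity in `λ`, uniformly for `s ∈ ℝ` and `x ∈ K`
    (hunif : ∀ t : ℝ, 0 < t → ∀ l₀ : Λ, ∀ ε : ℝ, 0 < ε → ∃ δ : ℝ, 0 < δ ∧
      ∀ l : Λ, dist l l₀ < δ → ∀ s : ℝ, ∀ x ∈ K,
        dist (S l (t + s) s x) (S l₀ (t + s) s x) < ε) :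
    ∃ Λs ∈ residual Λ, ∀ l₀ ∈ Λs, ∀ ε : ℝ, 0 < ε →
      ∃ δ : ℝ, 0 < δ ∧ ∀ l : Λ, dist l l₀ < δ →
        hausdorffDist (A l) (A l₀) < ε := by
  rcases isEmpty_or_nonempty X with hX | hX
  · refine ⟨Set.univ, Filter.univ_mem, fun l₀ _ ε hε => ⟨1, one_pos, fun l _ => ?_⟩⟩
    have h1 : A l = ∅ := Set.eq_empty_of_isEmpty _
    have h2 : A l₀ = ∅ := Set.eq_empty_of_isEmpty _
    rw [h1, h2, Metric.hausdorffDist_self_zero]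
    exact hε
  obtain ⟨x₀⟩ := hX
  -- attractors are nonempty
  have hAne : ∀ l, (A l).Nonempty := by
    intro l
    by_contra h
    rw [Set.not_nonempty_iff_eq_empty] at h
    obtain ⟨T, hT⟩ := (hA l).2.1 {x₀} isBounded_singleton 1 one_pos
    have h2 := hT T le_rfl 0 x₀ rfl
    rw [h, show EMetric.infEdist _ ∅ = ⊤ from Metric.infEDist_empty] at h2
    exact absurd h2 (not_lt.2 le_top)
  -- attractors are contained in K
  have hAK : ∀ l, A l ⊆ K := fun l =>
    (hA l).2.2 K hK (attracts_of_absorbs fun B hB => habs B hB l)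
  -- upper semicontinuity
  have husc := attractor_usc S hproc A hA K hK habs hunif
  -- the distance functions
  set g : X → Λ → ℝ := fun x l => Metric.infDist x (A l) with hgdef
  -- lower semicontinuity of each g x
  have hlsc : ∀ (x : X) (l₀ : Λ) (ε : ℝ), 0 < ε → ∃ δ : ℝ, 0 < δ ∧
      ∀ l : Λ, dist l l₀ < δ → g x l₀ ≤ g x l + ε := by
    intro x l₀ ε hε
    obtain ⟨δ, hδpos, hδ⟩ := husc l₀ ε hε
    refine ⟨δ, hδpos, fun l hl => ?_⟩
    obtain ⟨a, ha, hainf⟩ := (hA l).1.exists_infDist_eq_dist (hAne l) x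
    have h2 : EMetric.infEdist x (A l₀) ≤ ENNReal.ofReal (dist x a + ε) := by
      calc EMetric.infEdist x (A l₀)
          ≤ edist x a + EMetric.infEdist a (A l₀) :=
            EMetric.infEdist_le_edist_add_infEdist
        _ ≤ edist x a + ENNReal.ofReal ε := add_le_add le_rfl (hδ l hl a ha)
        _ = ENNReal.ofReal (dist x a + ε) := by
            rw [edist_dist, ← ENNReal.ofReal_add dist_nonneg hε.le]
    have h3 : Metric.infDist x (A l₀) ≤ dist x a + ε := by
      rw [Metric.infDist]
      exact ENNReal.toReal_le_of_le_ofReal (by positivity) h2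
    simp only [hgdef]
    rw [hainf]
    exact h3
  -- countable dense subset of K
  obtain ⟨D, hDK, hDcnt, hDdense⟩ := EMetric.subset_countable_closure_of_compact hK
  haveI : Countable ↥D := hDcnt.to_subtype
  -- the open sets whose frontiers we remove
  set U : X → ℚ → Set Λ := fun x q => {l | (q : ℝ) < g x l} with hUdef
  have hUopen : ∀ x q, IsOpen (U x q) := by
    intro x q
    rw [Metric.isOpen_iff]
    intro l₀ hl₀
    simp only [hUdef, Set.mem_setOf_eq] at hl₀
    obtain ⟨δ, hδpos, hδ⟩ := hlsc x l₀ ((g x l₀ - q) / 2) (by linarith)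
    refine ⟨δ, hδpos, fun l hl => ?_⟩
    have h2 := hδ l (by rwa [Metric.mem_ball] at hl)
    simp only [hUdef, Set.mem_setOf_eq]
    linarith
  set Λs : Set Λ := ⋂ (x : D) (q : ℚ), (closure (U x q) \ U x q)ᶜ with hΛsdef
  have hres : Λs ∈ residual Λ := by
    rw [hΛsdef, countable_iInter_mem]
    intro x
    rw [countable_iInter_mem]
    intro q
    rw [← (hUopen x q).frontier_eq]
    apply residual_of_dense_open isClosed_frontier.isOpen_compl
    rw [← interior_eq_empty_iff_dense_compl, ← frontier_compl]
    exact interior_frontier (hUopen (x : X) q).isClosed_compl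
  refine ⟨Λs, hres, fun l₀ hl₀ ε hε => ?_⟩
  -- from membership in Λs: upper semicontinuity of each g x, x ∈ D, at l₀
  have hgusc : ∀ x ∈ D, ∀ ε' : ℝ, 0 < ε' → ∃ δ : ℝ, 0 < δ ∧
      ∀ l : Λ, dist l l₀ < δ → g x l < g x l₀ + ε' := by
    intro x hx ε' hε'
    obtain ⟨q, hq1, hq2⟩ := exists_rat_btwn (lt_add_of_pos_right (g x l₀) hε')
    have hnotU : l₀ ∉ U x q := by
      simp only [hUdef, Set.mem_setOf_eq, not_lt]
      exact hq1.le
    have hmem : l₀ ∈ (closure (U x q) \ U x q)ᶜ := by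
      have h1 := Set.mem_iInter.1 hl₀ ⟨x, hx⟩
      exact Set.mem_iInter.1 h1 q
    have hnotcl : l₀ ∉ closure (U x q) := fun hc => hmem ⟨hc, hnotU⟩
    have hopen : IsOpen (closure (U x q))ᶜ := isClosed_closure.isOpen_compl
    obtain ⟨δ, hδpos, hδball⟩ := Metric.isOpen_iff.1 hopen l₀ hnotcl
    refine ⟨δ, hδpos, fun l hl => ?_⟩
    have h2 : l ∉ U x q := fun hU => hδball (Metric.mem_ball.2 hl) (subset_closure hU)
    simp only [hUdef, Set.mem_setOf_eq, not_lt] at h2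
    linarith
  -- cover A l₀ by finitely many small balls with centers in A l₀
  obtain ⟨t, htsub, htfin, htcov⟩ := EMetric.totallyBounded_iff'.1
    (hA l₀).1.totallyBounded (ENNReal.ofReal (ε / 8)) (ENNReal.ofReal_pos.2 (by linarith))
  -- for each center, a good δ
  have hchoice : ∀ c ∈ t, ∃ δ : ℝ, 0 < δ ∧ ∀ l : Λ, dist l l₀ < δ →
      Metric.infDist c (A l) < 3 * ε / 8 := by
    intro c hc
    have hcK : c ∈ K := hAK l₀ (htsub hc)
    obtain ⟨x, hxD, hxd⟩ := Metric.mem_closure_iff.1 (hDdense hcK) (ε / 8) (by linarith)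
    have hgx0 : g x l₀ < ε / 8 := by
      calc g x l₀ ≤ dist x c := Metric.infDist_le_dist_of_mem (htsub hc)
        _ < ε / 8 := by rwa [dist_comm]
    obtain ⟨δ, hδpos, hδ⟩ := hgusc x hxD (ε / 8) (by linarith)
    refine ⟨δ, hδpos, fun l hl => ?_⟩
    have h1 : g x l < ε / 4 := by
      have := hδ l hl
      linarith
    calc Metric.infDist c (A l) ≤ Metric.infDist x (A l) + dist c x :=
          Metric.infDist_le_infDist_add_dist
      _ < ε / 4 + ε / 8 := add_lt_add h1 hxd
      _ ≤ 3 * ε / 8 := by linarith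
  choose! δf hδfpos hδf using hchoice
  -- a uniform positive lower bound for the finitely many δ's
  obtain ⟨δ₁, hδ₁pos, hδ₁le⟩ : ∃ δ₁ : ℝ, 0 < δ₁ ∧ ∀ c ∈ t, δ₁ ≤ δf c := by
    rcases t.eq_empty_or_nonempty with rfl | hne
    · exact ⟨1, one_pos, by simp⟩
    · set F := htfin.toFinset with hFdef
      have hFne : F.Nonempty := by
        rw [hFdef, Set.Finite.toFinset_nonempty]
        exact hne
      refine ⟨F.inf' hFne δf, ?_, ?_⟩
      · rw [Finset.lt_inf'_iff]
        intro c hc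
        exact hδfpos c (htfin.mem_toFinset.1 hc)
      · intro c hc
        exact Finset.inf'_le _ (htfin.mem_toFinset.2 hc)
  obtain ⟨δ₂, hδ₂pos, hδ₂⟩ := husc l₀ (ε / 2) (by linarith)
  refine ⟨min δ₁ δ₂, lt_min hδ₁pos hδ₂pos, fun l hl => ?_⟩
  have hl1 : dist l l₀ < δ₁ := lt_of_lt_of_le hl (min_le_left _ _)
  have hl2 : dist l l₀ < δ₂ := lt_of_lt_of_le hl (min_le_right _ _)
  -- one-sided bound: A l near A l₀
  have hd1 : ∀ b ∈ A l, EMetric.infEdist b (A l₀) ≤ ENNReal.ofReal (ε / 2) := hδ₂ l hl2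
  -- other-sided bound: A l₀ near A l
  have hd2 : ∀ a ∈ A l₀, EMetric.infEdist a (A l) ≤ ENNReal.ofReal (ε / 2) := by
    intro a ha
    obtain ⟨c, hc, hball⟩ := Set.mem_iUnion₂.1 (htcov ha)
    have hac : dist a c < ε / 8 := by
      rw [EMetric.mem_ball] at hball
      exact edist_lt_ofReal.1 hball
    have h1 : Metric.infDist c (A l) < 3 * ε / 8 := hδf c hc l (lt_of_lt_of_le hl1 (hδ₁le c hc))
    have h2 : Metric.infDist a (A l) < ε / 2 := by
      calc Metric.infDist a (A l) ≤ Metric.infDist c (A l) + dist a c :=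
            Metric.infDist_le_infDist_add_dist
        _ < 3 * ε / 8 + ε / 8 := add_lt_add h1 hac
        _ = ε / 2 := by ring
    obtain ⟨b, hb, hbd⟩ := (Metric.infDist_lt_iff (hAne l)).1 h2
    calc EMetric.infEdist a (A l) ≤ edist a b := EMetric.infEdist_le_edist_of_mem hb
      _ ≤ ENNReal.ofReal (ε / 2) := by
          rw [edist_dist]
          exact ENNReal.ofReal_le_ofReal hbd.le
  have hH : EMetric.hausdorffEdist (A l) (A l₀) ≤ ENNReal.ofReal (ε / 2) :=
    EMetric.hausdorffEdist_le_of_infEdist hd1 hd2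
  have hfin : hausdorffDist (A l) (A l₀) ≤ ε / 2 := by
    rw [Metric.hausdorffDist]
    exact ENNReal.toReal_le_of_le_ofReal (by linarith) hH
  linarith
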